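/- Let F : ℝⁿ → ℝ be convex and differentiable, χ : ℝⁿ → ℝ convex, C ⊆ ℝⁿ a convex set, H a symmetric positive definite n×n real matrix, and t > 0. Suppose u* minimizes F + χ over C, and u⁺ minimizes z ↦ (1/(2t))‖z − (u − t H⁻¹ ∇F(u))‖²_H + χ(z) over C for some u ∈ ℝⁿ. Then ‖u⁺ − u*‖_H ≤ ‖u − u* − t H⁻¹(∇F(u) − ∇F(u*))‖_H. -/

import Mathlib

open Matrix

/-- The squared `H`-norm `‖x‖²_H = xᵀ H x` on Euclidean space. -/
noncomputable def hNormSq {n : ℕ} (H : Matrix (Fin n) (Fin n) ℝ)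
    (x : EuclideanSpace ℝ (Fin n)) : ℝ :=
  inner ℝ x (Matrix.toEuclideanLin H x)

/-- The `H`-norm `‖x‖_H = (xᵀ H x)^{1/2}` on Euclidean space. -/
noncomputable def hNorm {n : ℕ} (H : Matrix (Fin n) (Fin n) ℝ)
    (x : EuclideanSpace ℝ (Fin n)) : ℝ :=
  Real.sqrt (hNormSq H x)

open Filter Set
open scoped Topology RealInnerProductSpace
open scoped MatrixOrder

private lemma lim_nonneg' (A B : ℝ) (h : ∀ s ∈ Set.Ioc (0:ℝ) 1, 0 ≤ A + s * B) : 0 ≤ A := by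
  have ht : Tendsto (fun s : ℝ => A + s * B) (𝓝[>] (0:ℝ)) (𝓝 A) := by
    have : Tendsto (fun s : ℝ => A + s * B) (𝓝 (0:ℝ)) (𝓝 (A + 0 * B)) :=
      (tendsto_const_nhds.add ((continuous_id.mul continuous_const).tendsto 0))
    simpa using this.mono_left nhdsWithin_le_nhds
  refine ge_of_tendsto ht ?_
  filter_upwards [Ioc_mem_nhdsGT_of_mem (by simp : (0:ℝ) ∈ Ico (0:ℝ) 1)] with s hs
  exact h s hs

private lemma grad_line' {n : ℕ} (F : EuclideanSpace ℝ (Fin n) → ℝ) (hFdiff : Differentiable ℝ F)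
    (x d : EuclideanSpace ℝ (Fin n)) :
    HasDerivAt (fun s : ℝ => F (x + s • d)) ⟪gradient F x, d⟫ 0 := by
  have h1 : HasFDerivAt F (InnerProductSpace.toDual ℝ _ (gradient F x)) (x + (0:ℝ) • d) := by
    simpa using (hFdiff x).hasGradientAt.hasFDerivAt
  have h2 : HasDerivAt (fun s : ℝ => x + s • d) d 0 := by
    simpa using ((hasDerivAt_id (0:ℝ)).smul_const d).const_add x
  simpa [Function.comp_def] using h1.comp_hasDerivAt (0:ℝ) h2

/-- variational inequality at a constrained minimizer of `F + χ`. -/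
private lemma min_VI' {n : ℕ} (F : EuclideanSpace ℝ (Fin n) → ℝ) (hFdiff : Differentiable ℝ F)
    (χ : EuclideanSpace ℝ (Fin n) → ℝ) (hχ : ConvexOn ℝ Set.univ χ)
    (C : Set (EuclideanSpace ℝ (Fin n))) (hC : Convex ℝ C)
    (x : EuclideanSpace ℝ (Fin n)) (hx : x ∈ C)
    (hmin : ∀ z ∈ C, F x + χ x ≤ F z + χ z)
    (z : EuclideanSpace ℝ (Fin n)) (hz : z ∈ C) :
    0 ≤ ⟪gradient F x, z - x⟫ + (χ z - χ x) := by
  set d := z - x with hd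
  set q : ℝ → ℝ := fun s => F (x + s • d) with hq
  have hder := grad_line' F hFdiff x d
  have hslope : Tendsto (slope q 0) (𝓝[>] (0:ℝ)) (𝓝 ⟪gradient F x, d⟫) :=
    (hasDerivAt_iff_tendsto_slope.mp hder).mono_left
      (nhdsWithin_mono _ (fun s hs => by simpa using ne_of_gt hs))
  have htend : Tendsto (fun s : ℝ => slope q 0 s + (χ z - χ x)) (𝓝[>] (0:ℝ))
      (𝓝 (⟪gradient F x, d⟫ + (χ z - χ x))) := hslope.add_const _
  refine ge_of_tendsto htend ?_
  filter_upwards [Ioc_mem_nhdsGT_of_mem (by simp : (0:ℝ) ∈ Ico (0:ℝ) 1)] with s hs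
  have hs0 : (0:ℝ) < s := hs.1
  have hw : x + s • d = (1 - s) • x + s • z := by
    rw [hd]; module
  have hwC : x + s • d ∈ C := by
    rw [hw]; exact hC hx hz (by linarith [hs.2]) hs0.le (by ring)
  have hχw : χ (x + s • d) ≤ (1 - s) * χ x + s * χ z := by
    rw [hw]
    exact hχ.2 (Set.mem_univ x) (Set.mem_univ z) (by linarith [hs.2]) hs0.le (by ring)
  have hmin' := hmin _ hwC
  have hE : 0 ≤ F (x + s • d) - F x + s * (χ z - χ x) := by nlinarith
  have : slope q 0 s + (χ z - χ x) =
      (F (x + s • d) - F x + s * (χ z - χ x)) / s := by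
    rw [slope_def_field]
    simp only [hq, zero_smul, add_zero]
    field_simp [hq, hs0.ne']
    ring
  rw [this]
  positivity


set_option maxHeartbeats 1000000 in
/-- Let `F` be convex and differentiable, `χ` convex, `C` convex, `H` symmetric positive
definite, `t > 0`. If `u*` minimizes `F + χ` over `C` and `u⁺` minimizes
`z ↦ (1/(2t))‖z − (u − t H⁻¹ ∇F(u))‖²_H + χ(z)` over `C`, then
`‖u⁺ − u*‖_H ≤ ‖u − u* − t H⁻¹(∇F(u) − ∇F(u*))‖_H`. -/
theorem prox_gradient_step_estimate (n : ℕ)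
    (F : EuclideanSpace ℝ (Fin n) → ℝ)
    (hF : ConvexOn ℝ Set.univ F) (hFdiff : Differentiable ℝ F)
    (χ : EuclideanSpace ℝ (Fin n) → ℝ) (hχ : ConvexOn ℝ Set.univ χ)
    (C : Set (EuclideanSpace ℝ (Fin n))) (hC : Convex ℝ C)
    (H : Matrix (Fin n) (Fin n) ℝ) (hH : H.PosDef)
    (t : ℝ) (ht : 0 < t)
    (ustar : EuclideanSpace ℝ (Fin n)) (hustarC : ustar ∈ C)
    (hustar : ∀ z ∈ C, F ustar + χ ustar ≤ F z + χ z)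
    (u uplus : EuclideanSpace ℝ (Fin n)) (huplusC : uplus ∈ C)
    (huplus : ∀ z ∈ C,
      (1 / (2 * t)) * hNormSq H
          (uplus - (u - t • Matrix.toEuclideanLin H⁻¹ (gradient F u))) + χ uplus ≤
        (1 / (2 * t)) * hNormSq H
          (z - (u - t • Matrix.toEuclideanLin H⁻¹ (gradient F u))) + χ z) :
    hNorm H (uplus - ustar) ≤
      hNorm H (u - ustar -
        t • Matrix.toEuclideanLin H⁻¹ (gradient F u - gradient F ustar)) := by
  classical
  set g := gradient F u with hg
  set gs := gradient F ustar with hgs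
  set L := Matrix.toEuclideanLin H with hLdef
  set Li := Matrix.toEuclideanLin H⁻¹ with hLidef
  have hLsym : ∀ x y, ⟪L x, y⟫ = ⟪x, L y⟫ :=
    fun x y => (Matrix.isHermitian_iff_isSymmetric.mp hH.1) x y
  have hcomp : ∀ x, L (Li x) = x := by
    intro x
    have hdet : IsUnit H.det := isUnit_iff_ne_zero.mpr hH.det_pos.ne'
    have h1 : H * H⁻¹ = 1 := Matrix.mul_nonsing_inv H hdet
    simp only [hLdef, hLidef, Matrix.toEuclideanLin_apply]
    simp [Matrix.mulVec_mulVec, h1]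
  set S := CFC.sqrt H with hSdef
  set T := Matrix.toEuclideanLin S with hTdef
  have hTsym : ∀ x y, ⟪T x, y⟫ = ⟪x, T y⟫ :=
    fun x y => (Matrix.isHermitian_iff_isSymmetric.mp (CFC.sqrt_nonneg H).posSemidef.1) x y
  have hTT : ∀ x, T (T x) = L x := by
    intro x
    have h1 : S * S = H := CFC.sqrt_mul_sqrt_self H hH.posSemidef.nonneg
    simp only [hTdef, hLdef, Matrix.toEuclideanLin_apply]
    simp [Matrix.mulVec_mulVec, h1]
  have hQ : ∀ x, hNormSq H x = ‖T x‖ ^ 2 := by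
    intro x
    rw [hNormSq, ← hLdef, ← hTT x, ← hTsym, real_inner_self_eq_norm_sq]
  have hNormEq : ∀ x, hNorm H x = ‖T x‖ := by
    intro x
    rw [hNorm, hQ, Real.sqrt_sq (norm_nonneg _)]
  -- VI for ustar
  have VI1 : 0 ≤ ⟪gs, uplus - ustar⟫ + (χ uplus - χ ustar) :=
    min_VI' F hFdiff χ hχ C hC ustar hustarC hustar uplus huplusC
  -- VI for uplus (quadratic objective)
  set v := u - t • Li g with hv
  have VI2 : 0 ≤ (1/t) * ⟪ustar - uplus, L (uplus - v)⟫ + (χ ustar - χ uplus) := by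
    set d := ustar - uplus with hd
    apply lim_nonneg' _ ((1/(2*t)) * hNormSq H d)
    intro s hs
    have hs0 : (0:ℝ) < s := hs.1
    have hw : uplus + s • d = (1 - s) • uplus + s • ustar := by rw [hd]; module
    have hwC : uplus + s • d ∈ C := by
      rw [hw]; exact hC huplusC hustarC (by linarith [hs.2]) hs0.le (by ring)
    have hχw : χ (uplus + s • d) ≤ (1 - s) * χ uplus + s * χ ustar := by
      rw [hw]
      exact hχ.2 (Set.mem_univ uplus) (Set.mem_univ ustar) (by linarith [hs.2]) hs0.le (by ring)
    have hmin := huplus _ hwC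
    have hexp : hNormSq H (uplus + s • d - v) =
        hNormSq H (uplus - v) + 2 * s * ⟪d, L (uplus - v)⟫ + s^2 * hNormSq H d := by
      have h1 : uplus + s • d - v = (uplus - v) + s • d := by module
      rw [h1]
      simp only [hNormSq, ← hLdef, map_add, LinearMap.map_smul, inner_add_left,
        inner_add_right, real_inner_smul_left, real_inner_smul_right]
      have e : ⟪uplus - v, L d⟫ = ⟪d, L (uplus - v)⟫ := by
        rw [real_inner_comm]; exact hLsym d _
      linear_combination (s : ℝ) * e
    rw [hexp] at hmin
    have hexpr : 0 ≤ (1/(2*t)) * (2 * s * ⟪d, L (uplus - v)⟫ + s^2 * hNormSq H d)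
        + s * (χ ustar - χ uplus) := by nlinarith [hmin, hχw]
    have heq : (1/t) * ⟪d, L (uplus - v)⟫ + (χ ustar - χ uplus)
        + s * ((1/(2*t)) * hNormSq H d) =
        ((1/(2*t)) * (2 * s * ⟪d, L (uplus - v)⟫ + s^2 * hNormSq H d)
          + s * (χ ustar - χ uplus)) / s := by
      field_simp
      ring
    rw [heq]
    positivity
  -- combine the two variational inequalities
  set a := uplus - ustar with ha
  set b := u - ustar - t • Li (g - gs) with hb
  have hLab : L a - L b = L uplus - L u + t • g - t • gs := by
    rw [ha, hb, map_sub, map_sub, map_sub, LinearMap.map_smul, hcomp, smul_sub]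
    abel
  have hLuv : L (uplus - v) = L uplus - L u + t • g := by
    rw [hv, map_sub, map_sub, LinearMap.map_smul, hcomp]
    abel
  have hmain : ⟪a, L a⟫ ≤ ⟪a, L b⟫ := by
    have h1 : 0 ≤ ⟪ustar - uplus, L (uplus - v)⟫ + t * ⟪gs, a⟫ := by
      have h1a : 0 ≤ t * ((1/t) * ⟪ustar - uplus, L (uplus - v)⟫ + (χ ustar - χ uplus)) :=
        mul_nonneg ht.le VI2
      have h1b : 0 ≤ t * (⟪gs, a⟫ + (χ uplus - χ ustar)) := mul_nonneg ht.le VI1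
      have e : t * ((1/t) * ⟪ustar - uplus, L (uplus - v)⟫ + (χ ustar - χ uplus)) =
          ⟪ustar - uplus, L (uplus - v)⟫ + t * (χ ustar - χ uplus) := by
        field_simp
      nlinarith [h1a, h1b, e]
    have h2 : ⟪-a, L a - L b⟫ = ⟪ustar - uplus, L (uplus - v)⟫ + t * ⟪gs, a⟫ := by
      have e1 : (-a : EuclideanSpace ℝ (Fin n)) = ustar - uplus := by rw [ha, neg_sub]
      have e3 : L a - L b = L (uplus - v) - t • gs := by rw [hLab, hLuv]
      rw [e1, e3, inner_sub_right, real_inner_smul_right]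
      have e4 : ⟪ustar - uplus, gs⟫ + ⟪gs, a⟫ = 0 := by
        rw [ha, inner_sub_left, inner_sub_right, real_inner_comm ustar gs,
          real_inner_comm uplus gs]
        ring
      linear_combination (-t : ℝ) * e4
    have h3 : ⟪-a, L a - L b⟫ = ⟪a, L b⟫ - ⟪a, L a⟫ := by
      rw [inner_neg_left, inner_sub_right]; ring
    linarith [h1, h2, h3]
  -- Cauchy–Schwarz in the H-inner product via the square root
  have hTa : ⟪a, L a⟫ = ‖T a‖ ^ 2 := by
    rw [← hTT a, ← hTsym, real_inner_self_eq_norm_sq]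
  have hTb : ⟪a, L b⟫ = ⟪T a, T b⟫ := by
    rw [← hTT b, ← hTsym]
  have hCS : ⟪T a, T b⟫ ≤ ‖T a‖ * ‖T b‖ := real_inner_le_norm _ _
  have hle : ‖T a‖ ^ 2 ≤ ‖T a‖ * ‖T b‖ := by
    have h := hmain
    rw [hTa, hTb] at h
    linarith [hCS]
  rw [hNormEq, hNormEq]
  rcases eq_or_lt_of_le (norm_nonneg (T a)) with h0 | h0
  · rw [← h0]; exact norm_nonneg _
  · nlinarith [hle, h0]
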